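/- Fix n ≥ 1 and an open set U ⊆ ℝ \ {0}. For a sufficiently smooth function f on U (C^{n+2} suffices) define (Tₙ f)(x) = xⁿ·(D − n/x)(D − (n−1)/x)···(D − 1/x) f (x), where D = d/dx and the factors are composed in the indicated order, and define (Lₙ g)(x) = g''(x) − (2n/x)·g'(x). Then for every x ∈ U: Tₙ(f'')(x) = Lₙ(Tₙ f)(x), i.e. Tₙ∘Δ = Lₙ∘Tₙ where Δ f = f''. -/

import Mathlib

/-- The first-order factor `D − k/x`, where `D = d/dx`. -/
noncomputable def opA (k : ℕ) (f : ℝ → ℝ) : ℝ → ℝ :=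
  fun x => deriv f x - (k : ℝ) / x * f x

/-- The composition `(D − n/x)(D − (n−1)/x)···(D − 1/x)`, the innermost factor
`(D − 1/x)` being applied first. -/
noncomputable def chain : ℕ → (ℝ → ℝ) → ℝ → ℝ
  | 0, f => f
  | k + 1, f => opA (k + 1) (chain k f)

/-- The higher intertwining operator `Tₙ = xⁿ(D − n/x)(D − (n−1)/x)···(D − 1/x)`. -/
noncomputable def Tn (n : ℕ) (f : ℝ → ℝ) : ℝ → ℝ :=
  fun x => x ^ n * chain n f x

lemma contDiffOn_chain {U : Set ℝ} (hU : IsOpen U) (hU0 : ∀ x ∈ U, x ≠ 0)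
    (k m : ℕ) {f : ℝ → ℝ} (hf : ContDiffOn ℝ ((m + k : ℕ)) f U) :
    ContDiffOn ℝ (m : ℕ∞) (chain k f) U := by
  induction k generalizing m with
  | zero => simpa [chain] using hf
  | succ k ih =>
    have hc : ContDiffOn ℝ (((m + 1) + k : ℕ)) f U :=
      hf.of_le (by exact_mod_cast le_of_eq (by omega))
    have h1 : ContDiffOn ℝ ((m + 1 : ℕ) : ℕ∞) (chain k f) U := ih (m + 1) hc
    show ContDiffOn ℝ (m : ℕ∞) (opA (k+1) (chain k f)) U
    unfold opA
    apply ContDiffOn.sub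
    · exact h1.deriv_of_isOpen hU (by exact_mod_cast le_refl (m+1))
    · exact (contDiffOn_const.div contDiffOn_id hU0).mul
        (h1.of_le (by exact_mod_cast Nat.le_succ m))

lemma lemB (k : ℕ) (f : ℝ → ℝ) (x : ℝ) (hx0 : x ≠ 0)
    (hd : DifferentiableAt ℝ (chain k f) x) :
    Tn (k+1) f x = x * deriv (Tn k f) x + (1 - 2*((k:ℝ)+1)) * Tn k f x := by
  have hD : deriv (Tn k f) x
      = (k : ℝ) * x ^ (k-1) * chain k f x + x ^ k * deriv (chain k f) x := by
    have := deriv_fun_mul (differentiableAt_pow (x := x) k) hd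
    simpa [show Tn k f = fun y => y ^ k * chain k f y from rfl] using this
  simp only [Tn, chain, opA, Nat.cast_add, Nat.cast_one]
  rw [hD]
  rcases k with _ | m
  · simp; field_simp; ring
  · have hx : x ^ (m+1-1) = x ^ m := rfl
    rw [hx]
    field_simp
    ring

lemma key {U : Set ℝ} (hU : IsOpen U) (hU0 : ∀ x ∈ U, x ≠ 0) :
    ∀ (k : ℕ) (f : ℝ → ℝ), ContDiffOn ℝ ((k + 2 : ℕ)) f U →
    ∀ x ∈ U,
      Tn k (fun y => deriv (deriv f) y) x =
        deriv (deriv (Tn k f)) x - 2 * (k : ℝ) / x * deriv (Tn k f) x := by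
  intro k
  induction k with
  | zero =>
    intro f hf x hx
    have hT : Tn 0 f = f := by funext y; simp [Tn, chain]
    have hT2 : Tn 0 (fun y => deriv (deriv f) y) = fun y => deriv (deriv f) y := by
      funext y; simp [Tn, chain]
    rw [hT, hT2]; simp
  | succ k ih =>
    intro f hf x hx
    have hx0 : x ≠ 0 := hU0 x hx
    have hc3 : ContDiffOn ℝ ((3:ℕ) : ℕ∞) (chain k f) U :=
      contDiffOn_chain hU hU0 k 3 (hf.of_le (by exact_mod_cast le_of_eq (by omega)))
    have hg3 : ContDiffOn ℝ ((3:ℕ) : ℕ∞) (Tn k f) U := by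
      show ContDiffOn ℝ ((3:ℕ) : ℕ∞) (fun y => y ^ k * chain k f y) U
      exact ((contDiff_id.pow k).contDiffOn).mul hc3
    have hgd : ∀ y ∈ U, DifferentiableAt ℝ (Tn k f) y := fun y hy =>
      (hg3.differentiableOn (by norm_num)).differentiableAt (hU.mem_nhds hy)
    have hg1 : ContDiffOn ℝ ((2:ℕ) : ℕ∞) (deriv (Tn k f)) U :=
      hg3.deriv_of_isOpen hU (by norm_num)
    have hg'd : ∀ y ∈ U, DifferentiableAt ℝ (deriv (Tn k f)) y := fun y hy =>
      (hg1.differentiableOn (by norm_num)).differentiableAt (hU.mem_nhds hy)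
    have hg2 : ContDiffOn ℝ ((1:ℕ) : ℕ∞) (deriv (deriv (Tn k f))) U :=
      hg1.deriv_of_isOpen hU (by norm_num)
    have hg''d : ∀ y ∈ U, DifferentiableAt ℝ (deriv (deriv (Tn k f))) y := fun y hy =>
      (hg2.differentiableOn (by norm_num)).differentiableAt (hU.mem_nhds hy)
    have hf'' : ContDiffOn ℝ ((k + 1 : ℕ)) (fun y => deriv (deriv f) y) U := by
      have h1 : ContDiffOn ℝ ((k + 2 : ℕ)) (deriv f) U :=
        hf.deriv_of_isOpen hU (by exact_mod_cast le_of_eq (by omega))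
      exact h1.deriv_of_isOpen hU (by exact_mod_cast le_refl (k+2))
    have hch'' : ∀ y ∈ U, DifferentiableAt ℝ (chain k (fun y => deriv (deriv f) y)) y := by
      intro y hy
      have := contDiffOn_chain hU hU0 k 1
        (hf''.of_le (m := ((1 + k : ℕ) : ℕ∞)) (by exact_mod_cast le_of_eq (by omega)))
      exact (this.differentiableOn (by norm_num)).differentiableAt (hU.mem_nhds hy)
    have IH := ih f (hf.of_le (by exact_mod_cast by omega))
    have e2 : Tn (k+1) (fun y => deriv (deriv f) y) x
        = x * deriv (Tn k (fun y => deriv (deriv f) y)) x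
          + (1 - 2*((k:ℝ)+1)) * Tn k (fun y => deriv (deriv f) y) x :=
      lemB k _ x hx0 (hch'' x hx)
    have evφ : Tn k (fun y => deriv (deriv f) y) =ᶠ[nhds x]
        (fun y => deriv (deriv (Tn k f)) y - 2*(k:ℝ) * y⁻¹ * deriv (Tn k f) y) := by
      apply Filter.eventuallyEq_of_mem (hU.mem_nhds hx)
      intro y hy
      have h2 : 2 * (k:ℝ) / y * deriv (Tn k f) y = 2*(k:ℝ) * y⁻¹ * deriv (Tn k f) y := by
        rw [div_eq_mul_inv]
      rw [IH y hy, h2]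
    have hφd : HasDerivAt
        (fun y => deriv (deriv (Tn k f)) y - 2*(k:ℝ) * y⁻¹ * deriv (Tn k f) y)
        (deriv (deriv (deriv (Tn k f))) x -
          (2*(k:ℝ) * (-(x^2)⁻¹) * deriv (Tn k f) x
            + (2*(k:ℝ) * x⁻¹) * deriv (deriv (Tn k f)) x)) x :=
      HasDerivAt.sub (hg''d x hx).hasDerivAt
        (HasDerivAt.mul (HasDerivAt.const_mul (2*(k:ℝ)) (hasDerivAt_inv hx0))
          (hg'd x hx).hasDerivAt)
    have Dφ : deriv (Tn k (fun y => deriv (deriv f) y)) x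
        = deriv (deriv (deriv (Tn k f))) x -
          (2*(k:ℝ) * (-(x^2)⁻¹) * deriv (Tn k f) x
            + (2*(k:ℝ) * x⁻¹) * deriv (deriv (Tn k f)) x) := by
      rw [evφ.deriv_eq]; exact hφd.deriv
    have evh : Tn (k+1) f =ᶠ[nhds x]
        (fun y => y * deriv (Tn k f) y + (1 - 2*((k:ℝ)+1)) * Tn k f y) := by
      apply Filter.eventuallyEq_of_mem (hU.mem_nhds hx)
      intro y hy
      exact lemB k f y (hU0 y hy) ((hc3.differentiableOn (by norm_num)).differentiableAt
        (hU.mem_nhds hy))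
    have hhd : ∀ y ∈ U, HasDerivAt
        (fun y => y * deriv (Tn k f) y + (1 - 2*((k:ℝ)+1)) * Tn k f y)
        (1 * deriv (Tn k f) y + y * deriv (deriv (Tn k f)) y
          + (1 - 2*((k:ℝ)+1)) * deriv (Tn k f) y) y := by
      intro y hy
      exact HasDerivAt.add (HasDerivAt.mul (hasDerivAt_id' y) (hg'd y hy).hasDerivAt)
        (HasDerivAt.const_mul (1 - 2*((k:ℝ)+1)) (hgd y hy).hasDerivAt)
    have evψ : deriv (fun y => y * deriv (Tn k f) y + (1 - 2*((k:ℝ)+1)) * Tn k f y)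
        =ᶠ[nhds x]
        (fun y => 1 * deriv (Tn k f) y + y * deriv (deriv (Tn k f)) y
          + (1 - 2*((k:ℝ)+1)) * deriv (Tn k f) y) := by
      apply Filter.eventuallyEq_of_mem (hU.mem_nhds hx)
      intro y hy
      exact (hhd y hy).deriv
    have hψd : HasDerivAt
        (fun y => 1 * deriv (Tn k f) y + y * deriv (deriv (Tn k f)) y
          + (1 - 2*((k:ℝ)+1)) * deriv (Tn k f) y)
        ((1 * deriv (deriv (Tn k f)) x)
          + (1 * deriv (deriv (Tn k f)) x + x * deriv (deriv (deriv (Tn k f))) x)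
          + (1 - 2*((k:ℝ)+1)) * deriv (deriv (Tn k f)) x) x :=
      HasDerivAt.add
        (HasDerivAt.add (HasDerivAt.const_mul (1:ℝ) (hg'd x hx).hasDerivAt)
          (HasDerivAt.mul (hasDerivAt_id' x) (hg''d x hx).hasDerivAt))
        (HasDerivAt.const_mul (1 - 2*((k:ℝ)+1)) (hg'd x hx).hasDerivAt)
    have D1 : deriv (Tn (k+1) f) x = 1 * deriv (Tn k f) x + x * deriv (deriv (Tn k f)) x
        + (1 - 2*((k:ℝ)+1)) * deriv (Tn k f) x := by
      rw [evh.deriv_eq]; exact (hhd x hx).deriv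
    have D2 : deriv (deriv (Tn (k+1) f)) x
        = (1 * deriv (deriv (Tn k f)) x)
          + (1 * deriv (deriv (Tn k f)) x + x * deriv (deriv (deriv (Tn k f))) x)
          + (1 - 2*((k:ℝ)+1)) * deriv (deriv (Tn k f)) x := by
      rw [evh.deriv.deriv_eq, evψ.deriv_eq]; exact hψd.deriv
    rw [e2, Dφ, IH x hx, D1, D2]
    push_cast
    field_simp
    ring

/-- `Tₙ` intertwines the one-dimensional Laplacian `Δ f = f''` with
`Lₙ g = g'' − (2n/x) g'`: for `f` of class `C^{n+2}` on an open set
`U ⊆ ℝ \ {0}`, `Tₙ(f'') = Lₙ(Tₙ f)` on `U`. -/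
theorem intertwining_Tn (n : ℕ) (hn : 1 ≤ n) (U : Set ℝ) (hU : IsOpen U)
    (hU0 : ∀ x ∈ U, x ≠ 0)
    (f : ℝ → ℝ) (hf : ContDiffOn ℝ (n + 2 : ℕ) f U) :
    ∀ x ∈ U,
      Tn n (fun y => deriv (deriv f) y) x =
        deriv (deriv (Tn n f)) x - 2 * (n : ℝ) / x * deriv (Tn n f) x := by
  exact key hU hU0 n f hf
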